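/- The semi-flow (G, I, π) is strongly sensitive: there exists ε > 0 such that for every nonempty open subset U of I, the set G \ D(U, ε) is finite (hence compact in the discrete topology), where D(U, ε) = {g ∈ G : diam(gU) > ε}. -/

import Mathlib

open Set Pointwise

/-- `B ⊆ G = ℕ∞` is syndetic: there is a finite `K` with `(t + K) ∩ B ≠ ∅` for all `t`. -/
def Syndetic (B : Set (WithTop ℕ)) : Prop :=
  ∃ K : Set (WithTop ℕ), K.Finite ∧ ∀ t : WithTop ℕ, (((t + ·) '' K) ∩ B).Nonempty

/-- `B ⊆ G = ℕ∞` is thick: for every finite `K` there is `t` with `t + K ⊆ B`. -/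
def Thick (B : Set (WithTop ℕ)) : Prop :=
  ∀ K : Set (WithTop ℕ), K.Finite → ∃ t : WithTop ℕ, ((t + ·) '' K) ⊆ B

/-- `B` is thickly syndetic: for every finite `K` there is a syndetic `S` with `S + K ⊆ B`. -/
def ThicklySyndetic (B : Set (WithTop ℕ)) : Prop :=
  ∀ K : Set (WithTop ℕ), K.Finite → ∃ S : Set (WithTop ℕ), Syndetic S ∧ S + K ⊆ B

/-- `B` is periodic: there are a syndetic additive submonoid `S` and `t` with `t + S ⊆ B`. -/
def Periodic (B : Set (WithTop ℕ)) : Prop :=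
  ∃ S : AddSubmonoid (WithTop ℕ), Syndetic (S : Set (WithTop ℕ)) ∧
    ∃ t : WithTop ℕ, ((t + ·) '' (S : Set (WithTop ℕ))) ⊆ B

/-- `B` is thickly periodic: for every finite `K` there is a periodic `P` with `P + K ⊆ B`. -/
def ThicklyPeriodic (B : Set (WithTop ℕ)) : Prop :=
  ∀ K : Set (WithTop ℕ), K.Finite → ∃ P : Set (WithTop ℕ), Periodic P ∧ P + K ⊆ B

/-- The tent map `f(x) = 1 - |1 - 2x|` on `I = [0,1]`. -/
noncomputable def tentMap (x : unitInterval) : unitInterval :=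
  ⟨1 - |1 - 2 * (x : ℝ)|, by
    obtain ⟨h0, h1⟩ := x.2
    constructor
    · have h : |1 - 2 * (x : ℝ)| ≤ 1 := abs_le.mpr ⟨by linarith, by linarith⟩
      linarith
    · have h : (0 : ℝ) ≤ |1 - 2 * (x : ℝ)| := abs_nonneg _
      linarith⟩

/-- The action `π : ℕ∞ × I → I`, with `π(n, x) = f^[n](x)` for `n ∈ ℕ` and `π(∞, x) = 0`. -/
noncomputable def piAct : WithTop ℕ → unitInterval → unitInterval := fun g x =>
  WithTop.recTopCoe 0 (fun n => tentMap^[n] x) g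

/-- The semi-flow `(ℕ∞, I, π)` is strongly sensitive: there is `ε > 0` such that for
every nonempty open `U ⊆ I`, the complement of `D(U, ε) = {g : diam (g U) > ε}` is
finite (hence compact in the discrete topology). -/
noncomputable def F : ℝ → ℝ := fun x => 1 - |1 - 2 * x|

lemma F_cont : Continuous F := by
  unfold F; continuity

lemma F_le (x : ℝ) (h : x ≤ 1/2) : F x = 2 * x := by
  unfold F
  rw [abs_of_nonneg (by linarith)]; ring

lemma F_ge (x : ℝ) (h : 1/2 ≤ x) : F x = 2 - 2 * x := by
  unfold F
  rw [abs_of_nonpos (by linarith)]; ring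

lemma dyadic : ∀ n : ℕ, ∀ k : ℕ, k + 1 ≤ 2 ^ n →
    Icc (0:ℝ) 1 ⊆ F^[n] '' Icc ((k : ℝ) / 2 ^ n) ((k + 1 : ℝ) / 2 ^ n) := by
  intro n
  induction n with
  | zero =>
    intro k hk
    have : k = 0 := by omega
    subst this
    simp
  | succ n ih =>
    intro k hk
    have h2 : (0:ℝ) < 2 ^ n := by positivity
    have h2' : (0:ℝ) < 2 ^ (n+1) := by positivity
    have hks : ((k:ℝ) + 1) ≤ 2 ^ (n+1) := by exact_mod_cast hk
    have ha : (k:ℝ) / 2 ^ (n+1) ≤ ((k:ℝ)+1) / 2 ^ (n+1) := by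
      gcongr
      linarith
    rw [Function.iterate_succ, Set.image_comp]
    rcases le_or_gt (k + 1) (2 ^ n) with hle | hgt
    · -- left half: F x = 2x there
      have hkr : ((k:ℝ) + 1) ≤ 2 ^ n := by exact_mod_cast hle
      have hb : ((k:ℝ) + 1) / 2 ^ (n+1) ≤ 1/2 := by
        rw [div_le_div_iff₀ h2' (by norm_num), pow_succ]
        nlinarith
      have hFa : F ((k:ℝ) / 2 ^ (n+1)) = (k:ℝ) / 2 ^ n := by
        rw [F_le _ (le_trans (by linarith) hb), pow_succ]
        field_simp
      have hFb : F (((k:ℝ)+1) / 2 ^ (n+1)) = ((k:ℝ)+1) / 2 ^ n := by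
        rw [F_le _ hb, pow_succ]
        field_simp
      have hiv : Icc ((k:ℝ)/2^n) (((k:ℝ)+1)/2^n) ⊆
          F '' Icc ((k:ℝ) / 2 ^ (n+1)) (((k:ℝ)+1) / 2 ^ (n+1)) := by
        rw [← hFa, ← hFb]
        exact intermediate_value_Icc ha F_cont.continuousOn
      exact (ih k hle).trans (Set.image_mono hiv)
    · -- right half: F x = 2 - 2x there
      set k' : ℕ := 2 ^ (n+1) - 1 - k with hk'
      have hsum : k' + k + 1 = 2 ^ (n+1) := by omega
      have hsumr : (k':ℝ) + k + 1 = 2 ^ (n+1) := by exact_mod_cast congrArg (Nat.cast (R := ℝ)) hsum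
      have hk'le : k' + 1 ≤ 2 ^ n := by
        have := Nat.pow_succ 2 n
        omega
      have hgr : (2:ℝ) ^ n ≤ (k:ℝ) := by
        have : (2:ℝ)^n ≤ ((k:ℝ)) := by exact_mod_cast Nat.le_of_lt_succ (by omega)
        exact this
      have hha : 1/2 ≤ (k:ℝ) / 2 ^ (n+1) := by
        rw [le_div_iff₀ h2', pow_succ]; nlinarith
      have hFa : F ((k:ℝ) / 2 ^ (n+1)) = ((k':ℝ)+1) / 2 ^ n := by
        rw [F_ge _ hha]
        rw [eq_div_iff (ne_of_gt h2)]
        have h21 : (2:ℝ)^(n+1) = 2 * 2^n := by ring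
        field_simp
        nlinarith [hsumr]
      have hFb : F (((k:ℝ)+1) / 2 ^ (n+1)) = (k':ℝ) / 2 ^ n := by
        rw [F_ge _ (le_trans hha (by linarith))]
        rw [eq_div_iff (ne_of_gt h2)]
        field_simp
        rw [pow_succ] at hsumr ⊢
        nlinarith [hsumr]
      have hiv : Icc ((k':ℝ)/2^n) (((k':ℝ)+1)/2^n) ⊆
          F '' Icc ((k:ℝ) / 2 ^ (n+1)) (((k:ℝ)+1) / 2 ^ (n+1)) := by
        rw [← hFa, ← hFb]
        exact intermediate_value_Icc' ha F_cont.continuousOn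
      exact (ih k' hk'le).trans (Set.image_mono hiv)

lemma F_onto : Icc (0:ℝ) 1 ⊆ F '' Icc 0 1 := by
  have h1 : F 0 = 0 := by rw [F_le 0 (by norm_num)]; ring
  have h2 : F (1/2) = 1 := by rw [F_le _ (by norm_num)]; ring
  have : Icc (F 0) (F (1/2)) ⊆ F '' Icc 0 (1/2) :=
    intermediate_value_Icc (by norm_num) F_cont.continuousOn
  rw [h1, h2] at this
  exact this.trans (Set.image_mono (Set.Icc_subset_Icc le_rfl (by norm_num)))

lemma F_iter_onto (j : ℕ) : Icc (0:ℝ) 1 ⊆ F^[j] '' Icc 0 1 := by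
  induction j with
  | zero => simp
  | succ j ih =>
    rw [Function.iterate_succ, Set.image_comp]
    exact ih.trans (Set.image_mono F_onto)

lemma exists_onto (a b : ℝ) (ha : 0 ≤ a) (hb : b ≤ 1) (hab : a < b) :
    ∃ N : ℕ, ∀ m : ℕ, N ≤ m → Icc (0:ℝ) 1 ⊆ F^[m] '' Icc a b := by
  -- pick n with 2/2^n < b - a
  obtain ⟨n, hn⟩ := exists_pow_lt_of_lt_one (by linarith : (0:ℝ) < (b - a)/2)
    (by norm_num : (1:ℝ)/2 < 1)
  have h2 : (0:ℝ) < 2 ^ n := by positivity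
  have hn' : 2 / 2 ^ n < b - a := by
    have hp : ((1:ℝ)/2)^n = 1/2^n := by rw [div_pow]; norm_num
    rw [hp, div_lt_div_iff₀ h2 (by norm_num)] at hn
    rw [div_lt_iff₀ h2]
    nlinarith
  set k : ℕ := ⌈a * 2 ^ n⌉₊ with hkdef
  have hak : a ≤ (k:ℝ) / 2 ^ n := by
    rw [le_div_iff₀ h2]; exact Nat.le_ceil _
  have hkb : ((k:ℝ) + 1) / 2 ^ n ≤ b := by
    have h1 : (k:ℝ) < a * 2 ^ n + 1 := Nat.ceil_lt_add_one (by positivity)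
    have h3 : (2:ℝ) / 2 ^ n * 2 ^ n = 2 := div_mul_cancel₀ 2 (ne_of_gt h2)
    have h5 : (2:ℝ) / 2 ^ n * 2 ^ n < (b - a) * 2 ^ n := mul_lt_mul_of_pos_right hn' h2
    rw [div_le_iff₀ h2]
    nlinarith
  have hk2 : k + 1 ≤ 2 ^ n := by
    have h4 : ((k:ℝ) + 1) / 2^n ≤ 1 := le_trans hkb hb
    rw [div_le_one h2] at h4
    exact_mod_cast h4
  have hsub : Icc ((k:ℝ)/2^n) (((k:ℝ)+1)/2^n) ⊆ Icc a b := Set.Icc_subset_Icc hak hkb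
  refine ⟨n, fun m hm => ?_⟩
  have hiter : F^[m] = F^[m - n] ∘ F^[n] := by
    rw [← Function.iterate_add, Nat.sub_add_cancel hm]
  rw [hiter, Set.image_comp]
  calc Icc (0:ℝ) 1 ⊆ F^[m-n] '' Icc 0 1 := F_iter_onto _
    _ ⊆ F^[m-n] '' (F^[n] '' Icc ((k:ℝ)/2^n) (((k:ℝ)+1)/2^n)) :=
        Set.image_mono (dyadic n k hk2)
    _ ⊆ _ := Set.image_mono (Set.image_mono hsub)


lemma piAct_coe (m : ℕ) (x : unitInterval) : piAct (m : WithTop ℕ) x = tentMap^[m] x := rfl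

lemma tent_val (x : unitInterval) : ((tentMap x : unitInterval) : ℝ) = F (x : ℝ) := rfl

lemma tent_iter_val (n : ℕ) (x : unitInterval) :
    ((tentMap^[n] x : unitInterval) : ℝ) = F^[n] (x : ℝ) := by
  induction n generalizing x with
  | zero => simp
  | succ n ih =>
    rw [Function.iterate_succ_apply', Function.iterate_succ_apply', tent_val, ih]


theorem stmt8 :
    ∃ ε : ℝ, 0 < ε ∧ ∀ U : Set unitInterval, IsOpen U → U.Nonempty →
      ({g : WithTop ℕ | ε < Metric.diam (piAct g '' U)}ᶜ).Finite := by
  refine ⟨1/2, by norm_num, fun U hU hne => ?_⟩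
  obtain ⟨x, hxU⟩ := hne
  obtain ⟨δ, hδ, hball⟩ := Metric.isOpen_iff.mp hU x hxU
  set δ' := min δ 1 with hδ'def
  have hδ'0 : 0 < δ' := lt_min hδ one_pos
  have hδ'δ : δ' ≤ δ := min_le_left _ _
  have hδ'1 : δ' ≤ 1 := min_le_right _ _
  obtain ⟨hx0, hx1⟩ := x.2
  set a := max 0 ((x:ℝ) - δ'/2) with hadef
  set b := min 1 ((x:ℝ) + δ'/2) with hbdef
  have ha0 : 0 ≤ a := le_max_left _ _
  have hb1 : b ≤ 1 := min_le_left _ _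
  have hab : a < b := by
    apply lt_min
    · apply max_lt <;> linarith
    · apply max_lt <;> linarith
  have hmem : ∀ t, t ∈ Icc a b → ∃ ht : t ∈ unitInterval, (⟨t, ht⟩ : unitInterval) ∈ U := by
    intro t ht
    have hta : a ≤ t := ht.1
    have htb : t ≤ b := ht.2
    have ht0 : 0 ≤ t := le_trans ha0 hta
    have ht1 : t ≤ 1 := le_trans htb hb1
    have h1 : t ≤ (x:ℝ) + δ'/2 := le_trans htb (min_le_right _ _)
    have h2 : (x:ℝ) - δ'/2 ≤ t := le_trans (le_max_right _ _) hta
    refine ⟨⟨ht0, ht1⟩, hball ?_⟩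
    rw [Metric.mem_ball, Subtype.dist_eq, Real.dist_eq]
    have : |t - (x:ℝ)| ≤ δ'/2 := abs_le.mpr ⟨by linarith, by linarith⟩
    linarith
  obtain ⟨N, hN⟩ := exists_onto a b ha0 hb1 hab
  have key : ∀ m : ℕ, N ≤ m → (1:ℝ)/2 < Metric.diam (piAct (m : WithTop ℕ) '' U) := by
    intro m hm
    have hsub : Icc (0:ℝ) 1 ⊆ F^[m] '' Icc a b := hN m hm
    obtain ⟨t0, ht0, h0⟩ := hsub (⟨le_rfl, zero_le_one⟩ : (0:ℝ) ∈ Icc (0:ℝ) 1)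
    obtain ⟨t1, ht1, h1⟩ := hsub (⟨zero_le_one, le_rfl⟩ : (1:ℝ) ∈ Icc (0:ℝ) 1)
    obtain ⟨h0I, h0U⟩ := hmem t0 ht0
    obtain ⟨h1I, h1U⟩ := hmem t1 ht1
    set p := piAct (m : WithTop ℕ) ⟨t0, h0I⟩ with hp
    set q := piAct (m : WithTop ℕ) ⟨t1, h1I⟩ with hq
    have hpU : p ∈ piAct (m : WithTop ℕ) '' U := ⟨_, h0U, rfl⟩
    have hqU : q ∈ piAct (m : WithTop ℕ) '' U := ⟨_, h1U, rfl⟩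
    have ep : (p : ℝ) = 0 := by rw [hp, piAct_coe, tent_iter_val]; exact h0
    have eq' : (q : ℝ) = 1 := by rw [hq, piAct_coe, tent_iter_val]; exact h1
    have hdist : dist p q = 1 := by
      rw [Subtype.dist_eq, Real.dist_eq, ep, eq']; norm_num
    have hbd : Bornology.IsBounded (piAct (m : WithTop ℕ) '' U) :=
      isCompact_univ.isBounded.subset (subset_univ _)
    calc (1:ℝ)/2 < 1 := by norm_num
      _ = dist p q := hdist.symm
      _ ≤ _ := Metric.dist_le_diam_of_mem hbd hpU hqU
  apply Set.Finite.subset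
    (Set.Finite.insert ⊤ ((Set.finite_Iio N).image (fun k : ℕ => (k : WithTop ℕ))))
  intro g hg
  simp only [mem_compl_iff, mem_setOf_eq, not_lt] at hg
  induction g using WithTop.recTopCoe with
  | top => exact mem_insert _ _
  | coe k =>
    refine Set.mem_insert_iff.mpr (Or.inr ⟨k, ?_, rfl⟩)
    simp only [mem_Iio]
    by_contra hk
    exact absurd hg (not_le.mpr (key k (le_of_not_gt hk)))
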